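/- Let p, q, b, c, d, e ∈ ℂ satisfy p·q = 1, (b² − e²)·(q + p) + (c² − d²)·(q − p) = 0, and (b·e − c·d)² = 1. Set r = −(p² + q²), s = (c² + d²) − (b² + e²), and u = −(b² + c² + d² + e²). Then in ℂ[x,y,z] the determinant of the 4×4 matrix with rows (x + p·y, 0, b·z, d·z), (0, x − p·y, c·z, e·z), (b·z, c·z, x + q·y, 0), (d·z, e·z, 0, x − q·y) equals x⁴ + y⁴ + z⁴ + r·x²y² + s·y²z² + u·z²x². -/

import Mathlib

open MvPolynomial

/-- With `p·q = 1`, `(b²−e²)(q+p)+(c²−d²)(q−p) = 0`, `(be−cd)² = 1`,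
`r = −(p²+q²)`, `s = (c²+d²)−(b²+e²)`, `u = −(b²+c²+d²+e²)`, the determinant of the
matrix `x·A + y·B + z·C` (rows `(x+py, 0, bz, dz)`, `(0, x−py, cz, ez)`,
`(bz, cz, x+qy, 0)`, `(dz, ez, 0, x−qy)`) equals
`x⁴ + y⁴ + z⁴ + r·x²y² + s·y²z² + u·z²x²` in `ℂ[x,y,z]`. -/
theorem stmt_13 (p q b c d e r s u : ℂ)
    (hpq : p * q = 1)
    (h1 : (b ^ 2 - e ^ 2) * (q + p) + (c ^ 2 - d ^ 2) * (q - p) = 0)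
    (h2 : (b * e - c * d) ^ 2 = 1)
    (hr : r = -(p ^ 2 + q ^ 2))
    (hs : s = (c ^ 2 + d ^ 2) - (b ^ 2 + e ^ 2))
    (hu : u = -(b ^ 2 + c ^ 2 + d ^ 2 + e ^ 2)) :
    Matrix.det
      !![X 0 + MvPolynomial.C p * X 1, 0, MvPolynomial.C b * X 2, MvPolynomial.C d * X 2;
         0, X 0 - MvPolynomial.C p * X 1, MvPolynomial.C c * X 2, MvPolynomial.C e * X 2;
         MvPolynomial.C b * X 2, MvPolynomial.C c * X 2, X 0 + MvPolynomial.C q * X 1, 0;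
         (MvPolynomial.C d * X 2 : MvPolynomial (Fin 3) ℂ), MvPolynomial.C e * X 2, 0,
           X 0 - MvPolynomial.C q * X 1] =
      (X 0) ^ 4 + (X 1) ^ 4 + (X 2) ^ 4 + MvPolynomial.C r * (X 0) ^ 2 * (X 1) ^ 2 +
        MvPolynomial.C s * (X 1) ^ 2 * (X 2) ^ 2 +
        MvPolynomial.C u * (X 2) ^ 2 * (X 0) ^ 2 := by
  subst hr hs hu
  have Hpq : (MvPolynomial.C p * MvPolynomial.C q : MvPolynomial (Fin 3) ℂ) = 1 := by
    rw [← map_mul, hpq, map_one]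
  have H1 : ((MvPolynomial.C b ^ 2 - MvPolynomial.C e ^ 2) * (MvPolynomial.C q + MvPolynomial.C p)
      + (MvPolynomial.C c ^ 2 - MvPolynomial.C d ^ 2) * (MvPolynomial.C q - MvPolynomial.C p)
      : MvPolynomial (Fin 3) ℂ) = 0 := by
    have := congrArg (MvPolynomial.C (σ := Fin 3)) h1
    push_cast [map_add, map_mul, map_sub, map_pow, map_zero] at this
    simpa using this
  have H2 : ((MvPolynomial.C b * MvPolynomial.C e - MvPolynomial.C c * MvPolynomial.C d) ^ 2
      : MvPolynomial (Fin 3) ℂ) = 1 := by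
    have := congrArg (MvPolynomial.C (σ := Fin 3)) h2
    push_cast [map_mul, map_sub, map_pow, map_one] at this
    simpa using this
  simp [Matrix.det_succ_row_zero, Fin.sum_univ_succ, Fin.succAbove, Fin.castSucc, Fin.castAdd, Fin.castLE]
  linear_combination
    ((MvPolynomial.C p * MvPolynomial.C q + 1) * (X 1) ^ 4 + (MvPolynomial.C c ^ 2 + MvPolynomial.C d ^ 2 - MvPolynomial.C b ^ 2
      - MvPolynomial.C e ^ 2) * (X 1) ^ 2 * (X 2) ^ 2) * Hpq
    + (X 0) * (X 1) * (X 2) ^ 2 * H1 + (X 2) ^ 4 * H2
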